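/- Suppose f : ℝ^{d₁}×⋯×ℝ^{d_M} → ℝ has the property that for each block j the partial gradient ∇_{w_j} f is L-Lipschitz in w_j with other blocks fixed. Then updating the blocks sequentially via w_j^{t+1} = w_j^t - η∇_{w_j} f(w_1^{t+1},…,w_{j-1}^{t+1},w_j^t,…,w_M^t) - ηβ(w_j^t - u_j^t) with η < 2/(β+L) yields L_β(w^{t+1},u^t) ≤ L_β(w^t,u^t), where L_β(w,u) = f(w) + λ‖u‖₀ + (β/2)‖w-u‖². -/

import Mathlib

open scoped Classical

/-- ℓ⁰ "norm" of a blockwise vector: total number of nonzero entries. -/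
noncomputable def norm0P {M : ℕ} {d : Fin M → ℕ}
    (u : PiLp 2 (fun j : Fin M => EuclideanSpace ℝ (Fin (d j)))) : ℝ :=
  ∑ j : Fin M,
    ((((Finset.univ : Finset (Fin (d j))).filter fun i => u j i ≠ 0).card : ℝ))

lemma descent_quad {E : Type*} [NormedAddCommGroup E] [InnerProductSpace ℝ E] [CompleteSpace E]
    (f : E → ℝ) (hdiff : Differentiable ℝ f) (L : ℝ) (hL : 0 ≤ L) (x y : E)
    (hlip : ∀ t : ℝ, t ∈ Set.Icc (0:ℝ) 1 →
      ‖gradient f (x + t • (y - x)) - gradient f x‖ ≤ L * t * ‖y - x‖) :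
    f y ≤ f x + inner ℝ (gradient f x) (y - x) + L / 2 * ‖y - x‖ ^ 2 := by
  set γ : ℝ → E := fun t => x + t • (y - x) with hγdef
  have hγ : ∀ t : ℝ, HasDerivAt γ (y - x) t := by
    intro t
    simpa [hγdef] using ((hasDerivAt_id t).smul_const (y - x)).const_add x
  have hφ : ∀ t : ℝ,
      HasDerivAt (fun s => f (γ s)) (inner ℝ (gradient f (γ t)) (y - x) : ℝ) t := by
    intro t
    have h1 : HasFDerivAt f (InnerProductSpace.toDual ℝ E (gradient f (γ t))) (γ t) :=
      (hdiff (γ t)).hasGradientAt.hasFDerivAt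
    simpa [InnerProductSpace.toDual_apply_apply, Function.comp_def] using h1.comp_hasDerivAt t (hγ t)
  set ψ : ℝ → ℝ := fun t =>
    f (γ t) - t * inner ℝ (gradient f x) (y - x) - L / 2 * ‖y - x‖ ^ 2 * t ^ 2 with hψdef
  have hψ : ∀ t : ℝ, HasDerivAt ψ
      ((inner ℝ (gradient f (γ t)) (y - x) : ℝ) - inner ℝ (gradient f x) (y - x)
        - L / 2 * ‖y - x‖ ^ 2 * (2 * t)) t := by
    intro t
    have h2 : HasDerivAt (fun s : ℝ => s * (inner ℝ (gradient f x) (y - x) : ℝ))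
        (inner ℝ (gradient f x) (y - x) : ℝ) t := by
      simpa using (hasDerivAt_id t).mul_const (inner ℝ (gradient f x) (y - x) : ℝ)
    have h3 : HasDerivAt (fun s : ℝ => L / 2 * ‖y - x‖ ^ 2 * s ^ 2)
        (L / 2 * ‖y - x‖ ^ 2 * (2 * t)) t := by
      have h := (hasDerivAt_pow 2 t).const_mul (L / 2 * ‖y - x‖ ^ 2)
      norm_num at h
      convert h using 1
      try ring
    exact ((hφ t).sub h2).sub h3
  have hanti : AntitoneOn ψ (Set.Icc (0:ℝ) 1) := by
    apply antitoneOn_of_deriv_nonpos (convex_Icc 0 1)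
    · exact fun t _ => (hψ t).continuousAt.continuousWithinAt
    · exact fun t _ => (hψ t).differentiableAt.differentiableWithinAt
    · intro t ht
      rw [interior_Icc] at ht
      rw [(hψ t).deriv]
      have h4 : (inner ℝ (gradient f (γ t)) (y - x) : ℝ) - inner ℝ (gradient f x) (y - x)
          = inner ℝ (gradient f (γ t) - gradient f x) (y - x) := by
        rw [inner_sub_left]
      have h5 : (inner ℝ (gradient f (γ t) - gradient f x) (y - x) : ℝ)
          ≤ ‖gradient f (γ t) - gradient f x‖ * ‖y - x‖ := real_inner_le_norm _ _
      have h6 := hlip t ⟨ht.1.le, ht.2.le⟩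
      have h7 : (0:ℝ) ≤ ‖y - x‖ := norm_nonneg _
      nlinarith [mul_le_mul_of_nonneg_right h6 h7]
  have h01 : ψ 1 ≤ ψ 0 := hanti (Set.left_mem_Icc.2 zero_le_one)
    (Set.right_mem_Icc.2 zero_le_one) zero_le_one
  have hγ0 : γ 0 = x := by simp [hγdef]
  have hγ1 : γ 1 = y := by simp [hγdef]
  simp only [hψdef, hγ0, hγ1] at h01
  nlinarith [h01]

theorem blockwise_rvsm_descent {M : ℕ} {d : Fin M → ℕ}
    (f : PiLp 2 (fun j : Fin M => EuclideanSpace ℝ (Fin (d j))) → ℝ)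
    (L β lam η : ℝ)
    (hβ : 0 < β) (hlam : 0 < lam) (hL : 0 ≤ L) (hη : 0 < η) (hη2 : η < 2 / (β + L))
    (hdiff : Differentiable ℝ f)
    (hLip : ∀ x y : PiLp 2 (fun j : Fin M => EuclideanSpace ℝ (Fin (d j))),
      ∀ j : Fin M, (∀ i : Fin M, i ≠ j → x i = y i) →
        ‖gradient f y - gradient f x‖ ≤ L * ‖y j - x j‖)
    (w u : PiLp 2 (fun j : Fin M => EuclideanSpace ℝ (Fin (d j))))
    (z : ℕ → PiLp 2 (fun j : Fin M => EuclideanSpace ℝ (Fin (d j))))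
    (hz0 : z 0 = w)
    (hzstep : ∀ j : Fin M,
      (z ((j : ℕ) + 1)) j
        = z (j : ℕ) j - η • (gradient f (z (j : ℕ))) j
            - (η * β) • (z (j : ℕ) j - u j))
    (hzfix : ∀ j : Fin M, ∀ i : Fin M, i ≠ j → z ((j : ℕ) + 1) i = z (j : ℕ) i)
    (wnew : PiLp 2 (fun j : Fin M => EuclideanSpace ℝ (Fin (d j))))
    (hwnew : wnew = z M) :
    f wnew + lam * norm0P u + β / 2 * ‖wnew - u‖ ^ 2
      ≤ f w + lam * norm0P u + β / 2 * ‖w - u‖ ^ 2 := by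
  set g : PiLp 2 (fun j : Fin M => EuclideanSpace ℝ (Fin (d j))) → ℝ := fun p => f p + β / 2 * ‖p - u‖ ^ 2 with hg
  have key : ∀ j : Fin M, g (z ((j : ℕ) + 1)) ≤ g (z (j : ℕ)) := by
    intro j
    set x : PiLp 2 (fun j : Fin M => EuclideanSpace ℝ (Fin (d j))) := z (j : ℕ) with hx
    set y : PiLp 2 (fun j : Fin M => EuclideanSpace ℝ (Fin (d j))) := z ((j : ℕ) + 1) with hy
    set v : EuclideanSpace ℝ (Fin (d j)) := (gradient f x) j + β • (x j - u j) with hv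
    have hyj : y j - x j = (-η) • v := by
      rw [hy, hzstep j, hv]
      module
    have hsub : ∀ i : Fin M, i ≠ j → (y - x) i = 0 := by
      intro i hi
      rw [PiLp.sub_apply, hy, hx, hzfix j i hi, sub_self]
    have hnormsq : ‖y - x‖ ^ 2 = ‖y j - x j‖ ^ 2 := by
      rw [PiLp.norm_sq_eq_of_L2]
      rw [Finset.sum_eq_single j]
      · rw [PiLp.sub_apply]
      · intro i _ hi
        rw [hsub i hi, norm_zero]
        norm_num
      · intro h; exact absurd (Finset.mem_univ j) h
    have hnormeq : ‖y - x‖ = ‖y j - x j‖ := by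
      have h1 : ‖y - x‖ = Real.sqrt (‖y - x‖ ^ 2) := (Real.sqrt_sq (norm_nonneg _)).symm
      rw [h1, hnormsq, Real.sqrt_sq (norm_nonneg _)]
    -- inner products
    have hinner1 : (inner ℝ (gradient f x) (y - x) : ℝ)
        = inner ℝ ((gradient f x) j) (y j - x j) := by
      rw [PiLp.inner_apply, Finset.sum_eq_single j]
      · rw [PiLp.sub_apply]
      · intro i _ hi
        rw [hsub i hi, inner_zero_right]
      · intro h; exact absurd (Finset.mem_univ j) h
    have hinner2 : (inner ℝ (x - u) (y - x) : ℝ)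
        = inner ℝ (x j - u j) (y j - x j) := by
      rw [PiLp.inner_apply, Finset.sum_eq_single j]
      · rw [PiLp.sub_apply, PiLp.sub_apply]
      · intro i _ hi
        rw [hsub i hi, inner_zero_right]
      · intro h; exact absurd (Finset.mem_univ j) h
    have hA : (inner ℝ (gradient f x) (y - x) : ℝ) + β * inner ℝ (x - u) (y - x)
        = -η * ‖v‖ ^ 2 := by
      rw [hinner1, hinner2, hyj]
      rw [real_inner_smul_right, real_inner_smul_right]
      have : (inner ℝ ((gradient f x) j) v : ℝ) + β * inner ℝ (x j - u j) v = inner ℝ v v := by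
        rw [hv, inner_add_left, real_inner_smul_left]
      rw [real_inner_self_eq_norm_sq] at this
      nlinarith [this]
    have hnv : ‖y - x‖ ^ 2 = η ^ 2 * ‖v‖ ^ 2 := by
      rw [hnormsq, hyj, norm_smul]
      simp [abs_of_pos hη]
      ring
    -- descent lemma hypothesis
    have hlip' : ∀ t : ℝ, t ∈ Set.Icc (0:ℝ) 1 →
        ‖gradient f (x + t • (y - x)) - gradient f x‖ ≤ L * t * ‖y - x‖ := by
      intro t ht
      have hfix : ∀ i : Fin M, i ≠ j → x i = (x + t • (y - x)) i := by
        intro i hi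
        rw [PiLp.add_apply, PiLp.smul_apply, hsub i hi, smul_zero, add_zero]
      have := hLip x (x + t • (y - x)) j hfix
      have hj : (x + t • (y - x)) j - x j = t • (y j - x j) := by
        rw [PiLp.add_apply, PiLp.smul_apply, PiLp.sub_apply]
        abel
      rw [hj, norm_smul, Real.norm_eq_abs, abs_of_nonneg ht.1, ← hnormeq] at this
      calc ‖gradient f (x + t • (y - x)) - gradient f x‖ ≤ L * (t * ‖y - x‖) := this
        _ = L * t * ‖y - x‖ := by ring
    have hdesc := descent_quad f hdiff L hL x y hlip'
    -- quadratic expansion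
    have hquad : ‖y - u‖ ^ 2 = ‖x - u‖ ^ 2 + 2 * inner ℝ (x - u) (y - x) + ‖y - x‖ ^ 2 := by
      have : y - u = (x - u) + (y - x) := by abel
      rw [this, norm_add_sq_real]
    have hstep : η * (β + L) < 2 := by
      have hpos : 0 < β + L := by linarith
      have := (lt_div_iff₀ hpos).mp hη2
      linarith
    have hv2 : (0:ℝ) ≤ ‖v‖ ^ 2 := sq_nonneg _
    have hcoef : η ^ 2 * (β + L) / 2 - η ≤ 0 := by
      have h8 : η / 2 * (η * (β + L) - 2) ≤ 0 :=
        mul_nonpos_of_nonneg_of_nonpos (by linarith) (by linarith)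
      have h9 : η ^ 2 * (β + L) / 2 - η = η / 2 * (η * (β + L) - 2) := by ring
      linarith
    have hmul : ‖v‖ ^ 2 * (η ^ 2 * (β + L) / 2 - η) ≤ 0 :=
      mul_nonpos_of_nonneg_of_nonpos hv2 hcoef
    have hmul' : -η * ‖v‖ ^ 2 + (L + β) / 2 * η ^ 2 * ‖v‖ ^ 2 ≤ 0 := by
      have h9 : -η * ‖v‖ ^ 2 + (L + β) / 2 * η ^ 2 * ‖v‖ ^ 2
          = ‖v‖ ^ 2 * (η ^ 2 * (β + L) / 2 - η) := by ring
      linarith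
    have hq2 : β / 2 * ‖y - u‖ ^ 2
        = β / 2 * ‖x - u‖ ^ 2 + β * inner ℝ (x - u) (y - x) + β / 2 * ‖y - x‖ ^ 2 := by
      rw [hquad]; ring
    have hS1 : L / 2 * ‖y - x‖ ^ 2 + β / 2 * ‖y - x‖ ^ 2
        = (L + β) / 2 * η ^ 2 * ‖v‖ ^ 2 := by
      rw [hnv]; ring
    show f y + β / 2 * ‖y - u‖ ^ 2 ≤ f x + β / 2 * ‖x - u‖ ^ 2
    linarith [hdesc, hA, hq2, hS1, hmul']
  have mono : ∀ n : ℕ, n ≤ M → g (z n) ≤ g (z 0) := by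
    intro n
    induction n with
    | zero => intro _; exact le_refl _
    | succ k ih =>
      intro h
      have hk : k < M := h
      have := key ⟨k, hk⟩
      exact le_trans this (ih hk.le)
  have hfin := mono M le_rfl
  rw [hz0] at hfin
  rw [hwnew]
  have : g (z M) ≤ g w := hfin
  simp only [hg] at this
  linarith
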